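/- For all real a, b > 0, one has the exact integral identity ∫_{ℝ²} (1/|x|²) ( exp(−|x|²/(4a)) − exp(−|x|²/(4b)) )² dx = 2π log( (a+b)/(2√(ab)) ), and moreover 2π log((a+b)/(2√(ab))) ≤ π |log(a/b)|. -/

import Mathlib

open MeasureTheory Filter
open scoped Classical

noncomputable section

abbrev E2 := EuclideanSpace ℝ (Fin 2)

/-- The vector `(a, b)` in `ℝ²` (with the Euclidean norm). -/
def vec2 (a b : ℝ) : E2 := (WithLp.equiv 2 (Fin 2 → ℝ)).symm ![a, b]

/-- `x^⊥ = (-x₂, x₁)`. -/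
def perp (x : E2) : E2 := vec2 (-(x 1)) (x 0)

/-- The Oseen vortex velocity field. -/
def theta (t : ℝ) (x : E2) : E2 :=
  if x = 0 then 0 else
    ((1 - Real.exp (-(‖x‖ ^ 2) / (4 * (1 + t)))) / (2 * Real.pi * ‖x‖ ^ 2)) • perp x

/-- The Oseen vorticity (Gaussian). -/
def Xi (t : ℝ) (x : E2) : ℝ :=
  (1 / (4 * Real.pi * (1 + t))) * Real.exp (-(‖x‖ ^ 2) / (4 * (1 + t)))

/-- The `i`-th standard basis vector of `ℝ²`. -/
def e2 (i : Fin 2) : E2 := EuclideanSpace.single i 1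

/-- The truncated Oseen vortex `u^χ(x,t) = χ̃(x/ρ) Θ(x,t)`. -/
def uchi (χt : E2 → ℝ) (ρ t : ℝ) (x : E2) : E2 := χt (ρ⁻¹ • x) • theta t x


open Set Real



lemma laplace_exp {t : ℝ} (ht : 0 < t) :
    ∫ s in Set.Ioi (0:ℝ), Real.exp (-(t * s)) = t⁻¹ := by
  have h := integral_comp_mul_left_Ioi (fun u => Real.exp (-u)) 0 ht
  simp only [mul_zero] at h
  rw [h, integral_exp_neg_Ioi, neg_zero, Real.exp_zero, smul_eq_mul, mul_one]

lemma frullani_inner {p q : ℝ} (hpq : p ≤ q) {s : ℝ} (hs : 0 < s) :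
    ∫ t in Set.Ioc p q, Real.exp (-(t * s))
      = (Real.exp (-(p * s)) - Real.exp (-(q * s))) / s := by
  rw [← intervalIntegral.integral_of_le hpq]
  have h1 : ∀ t : ℝ, Real.exp (-(t * s)) = Real.exp ((-s) * t) := by
    intro t; ring_nf
  simp_rw [h1]
  rw [intervalIntegral.integral_comp_mul_left (fun u => Real.exp u) (by linarith : (-s) ≠ 0),
    integral_exp]
  field_simp [hs.ne']
  ring_nf; field_simp

lemma frullani_prod_integrable {p q : ℝ} (hp : 0 < p) (hpq : p ≤ q) :
    Integrable (fun z : ℝ × ℝ => Real.exp (-(z.2 * z.1)))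
      ((volume.restrict (Set.Ioi 0)).prod (volume.restrict (Set.Ioc p q))) := by
  have hbound : Integrable (fun z : ℝ × ℝ => Real.exp (-p * z.1) * 1)
      ((volume.restrict (Set.Ioi 0)).prod (volume.restrict (Set.Ioc p q))) :=
    (exp_neg_integrableOn_Ioi 0 hp).mul_prod (integrable_const 1)
  refine Integrable.mono' (by simpa using hbound) ?_ ?_
  · exact (Real.continuous_exp.comp (continuous_snd.mul continuous_fst).neg).aestronglyMeasurable
  · rw [Measure.prod_restrict]
    filter_upwards [ae_restrict_mem (measurableSet_Ioi.prod measurableSet_Ioc)] with z hz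
    obtain ⟨hz1, hz2⟩ := hz
    rw [Real.norm_eq_abs, Real.abs_exp]
    refine Real.exp_le_exp.2 ?_
    have h1 : (0:ℝ) < z.1 := hz1
    have h2 : p < z.2 := hz2.1
    nlinarith

lemma frullani_le {p q : ℝ} (hp : 0 < p) (hpq : p ≤ q) :
    ∫ s in Set.Ioi (0:ℝ), (Real.exp (-(p * s)) - Real.exp (-(q * s))) / s
      = Real.log (q / p) := by
  have hq : 0 < q := hp.trans_le hpq
  have hswap := integral_integral_swap (f := fun (s t : ℝ) => Real.exp (-(t * s)))
      (μ := volume.restrict (Set.Ioi (0:ℝ))) (ν := volume.restrict (Set.Ioc p q))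
      (frullani_prod_integrable hp hpq)
  have h1 : (∫ s in Set.Ioi (0:ℝ), ∫ t in Set.Ioc p q, Real.exp (-(t * s)))
      = ∫ s in Set.Ioi (0:ℝ), (Real.exp (-(p * s)) - Real.exp (-(q * s))) / s :=
    setIntegral_congr_fun measurableSet_Ioi (fun s hs => frullani_inner hpq hs)
  have h2 : (∫ t in Set.Ioc p q, ∫ s in Set.Ioi (0:ℝ), Real.exp (-(t * s)))
      = ∫ t in Set.Ioc p q, t⁻¹ :=
    setIntegral_congr_fun measurableSet_Ioc (fun t ht => laplace_exp (hp.trans ht.1))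
  have h3 : (∫ t in Set.Ioc p q, t⁻¹) = Real.log (q / p) := by
    rw [← intervalIntegral.integral_of_le hpq,
      integral_inv (Set.notMem_uIcc_of_lt hp hq)]
  rw [← h1, hswap, h2, h3]

lemma frullani_integrable_le {p q : ℝ} (hp : 0 < p) (hpq : p ≤ q) :
    IntegrableOn (fun s => (Real.exp (-(p * s)) - Real.exp (-(q * s))) / s)
      (Set.Ioi (0:ℝ)) := by
  have h := (frullani_prod_integrable hp hpq).integral_prod_left
  refine h.congr ?_
  filter_upwards [ae_restrict_mem measurableSet_Ioi] with s hs
  exact frullani_inner hpq hs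

lemma frullani_integrable {p q : ℝ} (hp : 0 < p) (hq : 0 < q) :
    IntegrableOn (fun s => (Real.exp (-(p * s)) - Real.exp (-(q * s))) / s)
      (Set.Ioi (0:ℝ)) := by
  rcases le_total p q with h | h
  · exact frullani_integrable_le hp h
  · have := (frullani_integrable_le hq h).neg
    refine this.congr (Filter.Eventually.of_forall fun s => ?_)
    simp only [Pi.neg_apply]
    ring

lemma frullani {p q : ℝ} (hp : 0 < p) (hq : 0 < q) :
    ∫ s in Set.Ioi (0:ℝ), (Real.exp (-(p * s)) - Real.exp (-(q * s))) / s
      = Real.log (q / p) := by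
  rcases le_total p q with h | h
  · exact frullani_le hp h
  · have h1 : (∫ s in Set.Ioi (0:ℝ), (Real.exp (-(p * s)) - Real.exp (-(q * s))) / s)
        = - ∫ s in Set.Ioi (0:ℝ), (Real.exp (-(q * s)) - Real.exp (-(p * s))) / s := by
      rw [← integral_neg]
      congr 1; funext s; ring
    rw [h1, frullani_le hq h, ← Real.log_inv, inv_div]

lemma oneD (a b : ℝ) (ha : 0 < a) (hb : 0 < b) :
    ∫ s in Set.Ioi (0:ℝ),
        (1 / s) * (Real.exp (-s / (4 * a)) - Real.exp (-s / (4 * b))) ^ 2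
      = Real.log ((a + b) ^ 2 / (4 * (a * b))) := by
  set α : ℝ := (2 * a)⁻¹ with hα
  set β : ℝ := (2 * b)⁻¹ with hβ
  set γ : ℝ := (4 * a)⁻¹ + (4 * b)⁻¹ with hγ
  have hα0 : 0 < α := by positivity
  have hβ0 : 0 < β := by positivity
  have hγ0 : 0 < γ := by positivity
  have key : ∀ s : ℝ,
      (1 / s) * (Real.exp (-s / (4 * a)) - Real.exp (-s / (4 * b))) ^ 2
        = (Real.exp (-(α * s)) - Real.exp (-(γ * s))) / s
          + (Real.exp (-(β * s)) - Real.exp (-(γ * s))) / s := by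
    intro s
    have e1 : Real.exp (-s / (4 * a)) * Real.exp (-s / (4 * a)) = Real.exp (-(α * s)) := by
      rw [← Real.exp_add]; congr 1; rw [hα]; field_simp; ring
    have e2 : Real.exp (-s / (4 * b)) * Real.exp (-s / (4 * b)) = Real.exp (-(β * s)) := by
      rw [← Real.exp_add]; congr 1; rw [hβ]; field_simp; ring
    have e3 : Real.exp (-s / (4 * a)) * Real.exp (-s / (4 * b)) = Real.exp (-(γ * s)) := by
      rw [← Real.exp_add]; congr 1; rw [hγ]; field_simp; ring
    have expand : (1 / s) * (Real.exp (-s / (4 * a)) - Real.exp (-s / (4 * b))) ^ 2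
        = (Real.exp (-s / (4 * a)) * Real.exp (-s / (4 * a))
            - Real.exp (-s / (4 * a)) * Real.exp (-s / (4 * b))) / s
          + (Real.exp (-s / (4 * b)) * Real.exp (-s / (4 * b))
            - Real.exp (-s / (4 * a)) * Real.exp (-s / (4 * b))) / s := by ring
    rw [expand, e1, e2, e3]
  rw [setIntegral_congr_fun measurableSet_Ioi (fun s _ => key s),
    integral_add (frullani_integrable hα0 hγ0) (frullani_integrable hβ0 hγ0),
    frullani hα0 hγ0, frullani hβ0 hγ0,
    ← Real.log_mul (by positivity) (by positivity)]
  congr 1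
  rw [hα, hβ, hγ]
  field_simp
  ring

lemma radial_reduction (g : ℝ → ℝ) :
    (∫ x : E2, g (‖x‖ ^ 2)) = Real.pi * ∫ s in Set.Ioi (0:ℝ), g s := by
  have hnorm : ∀ x : E2, ‖x‖ ^ 2 = x 0 ^ 2 + x 1 ^ 2 := by
    intro x
    rw [EuclideanSpace.norm_eq, Real.sq_sqrt (by positivity)]
    simp [Fin.sum_univ_two]
  -- transfer to ℝ × ℝ
  have hmp : MeasurePreserving
      (fun x : E2 => ((MeasurableEquiv.piFinTwo (fun _ : Fin 2 => ℝ))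
        (((MeasurableEquiv.toLp 2 (Fin 2 → ℝ)).symm) x))) volume volume :=
    (volume_preserving_piFinTwo (fun _ : Fin 2 => ℝ)).comp
      (EuclideanSpace.volume_preserving_symm_measurableEquiv_toLp (Fin 2))
  have hemb : MeasurableEmbedding
      (fun x : E2 => ((MeasurableEquiv.piFinTwo (fun _ : Fin 2 => ℝ))
        (((MeasurableEquiv.toLp 2 (Fin 2 → ℝ)).symm) x))) :=
    (((MeasurableEquiv.toLp 2 (Fin 2 → ℝ)).symm).trans
      (MeasurableEquiv.piFinTwo (fun _ : Fin 2 => ℝ))).measurableEmbedding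
  have step1 : (∫ x : E2, g (‖x‖ ^ 2)) = ∫ p : ℝ × ℝ, g (p.1 ^ 2 + p.2 ^ 2) := by
    rw [← hmp.integral_comp hemb (fun p : ℝ × ℝ => g (p.1 ^ 2 + p.2 ^ 2))]
    refine integral_congr_ae (Filter.Eventually.of_forall fun x => ?_)
    simp only [MeasurableEquiv.piFinTwo_apply]
    rw [hnorm x]
    rfl
  have step2 : (∫ p : ℝ × ℝ, g (p.1 ^ 2 + p.2 ^ 2))
      = ∫ p in polarCoord.target, p.1 • g (p.1 ^ 2) := by
    rw [← integral_comp_polarCoord_symm (fun p : ℝ × ℝ => g (p.1 ^ 2 + p.2 ^ 2))]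
    refine setIntegral_congr_fun polarCoord.open_target.measurableSet fun p _ => ?_
    simp only [polarCoord_symm_apply]
    congr 2
    rw [mul_pow, mul_pow, ← mul_add]
    rw [show Real.cos p.2 ^ 2 + Real.sin p.2 ^ 2 = 1 from by
      rw [← Real.sin_sq_add_cos_sq p.2]; ring]
    ring
  have step3 : (∫ p in polarCoord.target, p.1 • g (p.1 ^ 2))
      = (∫ r in Set.Ioi (0:ℝ), r * g (r ^ 2)) * (2 * Real.pi) := by
    rw [polarCoord_target, Measure.volume_eq_prod]
    have hpm := setIntegral_prod_mul (μ := volume) (ν := volume)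
      (fun r : ℝ => r * g (r ^ 2)) (fun _ : ℝ => (1:ℝ)) (Ioi 0) (Ioo (-Real.pi) Real.pi)
    rw [show (fun p : ℝ × ℝ => p.1 • g (p.1 ^ 2))
        = fun p : ℝ × ℝ => (fun r : ℝ => r * g (r ^ 2)) p.1 * (fun _ : ℝ => (1:ℝ)) p.2 from by
      funext p; simp [smul_eq_mul], hpm]
    rw [setIntegral_const, Real.volume_real_Ioo, smul_eq_mul, mul_one,
      max_eq_left (by linarith [Real.pi_pos] : (0:ℝ) ≤ Real.pi - (-Real.pi))]
    ring
  have step4 : (∫ r in Set.Ioi (0:ℝ), r * g (r ^ 2))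
      = (1 / 2) * ∫ s in Set.Ioi (0:ℝ), g s := by
    rw [← integral_comp_rpow_Ioi_of_pos (g := g) zero_lt_two]
    rw [← integral_const_mul]
    refine setIntegral_congr_fun measurableSet_Ioi fun r hr => ?_
    rw [show ((2:ℝ) - 1) = 1 from by norm_num, Real.rpow_one, smul_eq_mul,
      show (r : ℝ) ^ (2:ℝ) = r ^ 2 from by rw [← Real.rpow_natCast r 2]; norm_num]
    ring
  rw [step1, step2, step3, step4]
  ring

private lemma gdii_logle (a b : ℝ) (ha : 0 < a) (hb : 0 < b) (hba : b ≤ a) :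
    Real.log ((a + b) ^ 2 / (4 * (a * b))) ≤ Real.log (a / b) := by
  have hineq : (a + b) ^ 2 / (4 * (a * b)) ≤ a / b := by
    rw [div_le_div_iff₀ (by positivity) hb]
    nlinarith [mul_nonneg (mul_nonneg hb.le (sub_nonneg.2 hba))
      (by linarith : (0:ℝ) ≤ 3 * a + b)]
  exact Real.log_le_log (by positivity) hineq

private lemma gdii_logeq (a b : ℝ) (ha : 0 < a) (hb : 0 < b) :
    Real.log ((a + b) ^ 2 / (4 * (a * b)))
      = 2 * Real.log ((a + b) / (2 * Real.sqrt (a * b))) := by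
  rw [show (a + b) ^ 2 / (4 * (a * b)) = ((a + b) / (2 * Real.sqrt (a * b))) ^ 2 from by
    rw [div_pow, mul_pow, Real.sq_sqrt (by positivity)]; norm_num,
    Real.log_pow]
  push_cast
  ring

theorem gaussian_difference_integral_identity (a b : ℝ) (ha : 0 < a) (hb : 0 < b) :
    (∫ x : E2, (1 / ‖x‖ ^ 2)
        * (Real.exp (-(‖x‖ ^ 2) / (4 * a)) - Real.exp (-(‖x‖ ^ 2) / (4 * b))) ^ 2)
      = 2 * Real.pi * Real.log ((a + b) / (2 * Real.sqrt (a * b))) ∧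
    2 * Real.pi * Real.log ((a + b) / (2 * Real.sqrt (a * b)))
      ≤ Real.pi * |Real.log (a / b)| := by
  have hlogeq := gdii_logeq a b ha hb
  constructor
  · have h1 := radial_reduction
      (fun s => (1 / s) * (Real.exp (-s / (4 * a)) - Real.exp (-s / (4 * b))) ^ 2)
    rw [h1, oneD a b ha hb, hlogeq]
    ring
  · have key : Real.log ((a + b) ^ 2 / (4 * (a * b))) ≤ |Real.log (a / b)| := by
      rcases le_total b a with hba | hab
      · rw [abs_of_nonneg (Real.log_nonneg ((one_le_div hb).2 hba))]
        exact gdii_logle a b ha hb hba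
      · rw [abs_of_nonpos (Real.log_nonpos (by positivity) ((div_le_one hb).2 hab)),
          ← Real.log_inv, inv_div]
        have h := gdii_logle b a hb ha hab
        rwa [show (b + a) ^ 2 / (4 * (b * a)) = (a + b) ^ 2 / (4 * (a * b)) from by ring] at h
    calc 2 * Real.pi * Real.log ((a + b) / (2 * Real.sqrt (a * b)))
        = Real.pi * Real.log ((a + b) ^ 2 / (4 * (a * b))) := by rw [hlogeq]; ring
      _ ≤ Real.pi * |Real.log (a / b)| :=
        mul_le_mul_of_nonneg_left key Real.pi_pos.le
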